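/- In the natural deduction calculus for the purely implicational fragment of minimal logic (rules: assumption, →-elimination, →-introduction), if Γ ⊢ α, then there is a derivation of α from Γ in which every →-introduction application is greedy, i.e., every application concluding φ ⊃ ψ discharges all open occurrences of φ on which its premise ψ depends. -/
import Mathlib


/-- Formulas of the purely implicational fragment `M⊃` of minimal logic. -/
inductive Formula : Type
  | var : ℕ → Formula
  | imp : Formula → Formula → Formula
  deriving DecidableEq

/-- Natural deduction derivation trees, with assumption occurrences tagged by a
class number; an `intro` records the finite set of assumption classes of its
antecedent that it discharges. -/
inductive PTree : Type
  | ax : Formula → ℕ → PTree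
  | elim : PTree → PTree → PTree
  | intro : Formula → Finset ℕ → PTree → PTree

/-- The conclusion (end formula) of a derivation tree. -/
def PTree.concl : PTree → Formula
  | .ax φ _ => φ
  | .elim _ q =>
      match PTree.concl q with
      | .imp _ ψ => ψ
      | f => f
  | .intro φ _ p => .imp φ (PTree.concl p)

/-- The open (undischarged) assumption occurrences of a derivation tree. -/
def PTree.openAssumps : PTree → Finset (Formula × ℕ)
  | .ax φ n => {(φ, n)}
  | .elim p q => PTree.openAssumps p ∪ PTree.openAssumps q
  | .intro φ S p => PTree.openAssumps p \ S.image (fun n => (φ, n))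

/-- Well-formedness: `⊃`-elimination has a minor premise `φ` and a major
premise `φ ⊃ ψ` and concludes `ψ`. -/
inductive PTree.WF : PTree → Prop
  | ax (φ : Formula) (n : ℕ) : PTree.WF (.ax φ n)
  | elim {p q : PTree} : PTree.WF p → PTree.WF q →
      (∃ ψ, PTree.concl q = Formula.imp (PTree.concl p) ψ) → PTree.WF (.elim p q)
  | intro {p : PTree} (φ : Formula) (S : Finset ℕ) : PTree.WF p → PTree.WF (.intro φ S p)

/-- A derivation is greedy when every `⊃`-introduction discharges *all* open
occurrences of its antecedent on which its premise depends. -/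
inductive PTree.Greedy : PTree → Prop
  | ax (φ : Formula) (n : ℕ) : PTree.Greedy (.ax φ n)
  | elim {p q : PTree} : PTree.Greedy p → PTree.Greedy q → PTree.Greedy (.elim p q)
  | intro {p : PTree} {φ : Formula} {S : Finset ℕ} : PTree.Greedy p →
      (∀ n, (φ, n) ∈ PTree.openAssumps p → n ∈ S) → PTree.Greedy (.intro φ S p)


def PTree.greedify : PTree → PTree
  | .ax φ n => .ax φ n
  | .elim p q => .elim p.greedify q.greedify
  | .intro φ S p =>
      .intro φ (S ∪ (p.greedify.openAssumps.filter (fun x => x.1 = φ)).image Prod.snd)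
        p.greedify

theorem PTree.greedify_concl (p : PTree) : p.greedify.concl = p.concl := by
  induction p with
  | ax φ n => rfl
  | elim p q hp hq => simp [greedify, concl, hp, hq]
  | intro φ S p hp => simp [greedify, concl, hp]

theorem PTree.greedify_open (p : PTree) : p.greedify.openAssumps ⊆ p.openAssumps := by
  induction p with
  | ax φ n => exact Finset.Subset.refl _
  | elim p q hp hq =>
      simp only [greedify, openAssumps]
      exact Finset.union_subset_union hp hq
  | intro φ S p hp =>
      simp only [greedify, openAssumps]
      intro x hx
      simp only [Finset.mem_sdiff, Finset.mem_image] at hx ⊢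
      obtain ⟨hx1, hx2⟩ := hx
      refine ⟨hp hx1, ?_⟩
      rintro ⟨n, hn, rfl⟩
      exact hx2 ⟨n, Finset.mem_union_left _ hn, rfl⟩

theorem PTree.greedify_wf {p : PTree} (h : p.WF) : p.greedify.WF := by
  induction h with
  | ax φ n => exact .ax φ n
  | elim hp hq h hp' hq' =>
      refine .elim hp' hq' ?_
      rw [greedify_concl, greedify_concl]; exact h
  | intro φ S hp hp' => exact .intro _ _ hp'

theorem PTree.greedify_greedy (p : PTree) : p.greedify.Greedy := by
  induction p with
  | ax φ n => exact .ax φ n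
  | elim p q hp hq => exact .elim hp hq
  | intro φ S p hp =>
      refine .intro hp ?_
      intro n hn
      apply Finset.mem_union_right
      simp only [Finset.mem_image, Finset.mem_filter]
      exact ⟨(φ, n), ⟨hn, rfl⟩, rfl⟩

/-- if `Γ ⊢ α` in `M⊃` then there is a derivation of `α` from `Γ`
in which every `⊃`-introduction is greedy. -/
theorem greedy_intro_complete (Γ : Finset Formula) (α : Formula) (d : PTree)
    (hwf : d.WF) (hc : d.concl = α)
    (hΓ : (d.openAssumps).image Prod.fst ⊆ Γ) :
    ∃ d' : PTree, d'.WF ∧ d'.concl = α ∧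
      (d'.openAssumps).image Prod.fst ⊆ Γ ∧ d'.Greedy := by
  refine ⟨d.greedify, PTree.greedify_wf hwf, by rw [PTree.greedify_concl, hc], ?_, d.greedify_greedy⟩
  exact (Finset.image_subset_image d.greedify_open).trans hΓ
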